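/- Let p be a prime and n ≥ 1. There exists a ∈ W(ℤ_p) whose ghost components are w_j(a) = p^{p^{j+1}·n − 1} for all j ≥ 0, and any a ∈ W(ℤ_p) with these ghost components is sent to 0 by the ring homomorphism W(ℤ_p) → W(ℤ/p^n) induced by the projection ℤ_p → ℤ/p^n. -/

import Mathlib

open WittVector

namespace Stmt5Helper

open Finset

variable (p : ℕ) [Fact p.Prime]

lemma ghost_eq {R : Type*} [CommRing R] (a : WittVector p R) (j : ℕ) :
    ghostComponent j a = ∑ i ∈ range (j + 1), (p : R) ^ i * a.coeff i ^ p ^ (j - i) := by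
  rw [ghostComponent_apply, wittPolynomial_eq_sum_C_mul_X_pow]
  simp [map_sum]

variable (n : ℕ)

lemma exp_le (hn : 1 ≤ n) (j : ℕ) : n + j + 1 ≤ p ^ (j + 1) * n := by
  have h1 : j + 1 < p ^ (j + 1) := Nat.lt_pow_self (Fact.out : p.Prime).two_le
  have h2 : (j + 2) * n ≤ p ^ (j + 1) * n := Nat.mul_le_mul_right n h1
  have h3 : j ≤ j * n := Nat.le_mul_of_pos_right j hn
  have h4 : (j + 2) * n = j * n + 2 * n := by ring
  linarith

lemma step (hn : 1 ≤ n) (c : ℕ → ℤ_[p]) (j : ℕ)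
    (ih : ∀ i, i < j → (p : ℤ_[p]) ^ n ∣ c i) :
    (p : ℤ_[p]) ^ (n + j) ∣ ((p : ℤ_[p]) ^ (p ^ (j + 1) * n - 1)
      - ∑ i ∈ range j, (p : ℤ_[p]) ^ i * c i ^ p ^ (j - i)) := by
  apply dvd_sub
  · exact pow_dvd_pow _ (by have := exp_le p n hn j; omega)
  · refine Finset.dvd_sum fun i hi => ?_
    have hij : i < j := mem_range.mp hi
    obtain ⟨d, hd⟩ := ih i hij
    have h2 : n + j ≤ i + n * p ^ (j - i) := by
      have h3 : (j - i) + 1 ≤ p ^ (j - i) := Nat.lt_pow_self (Fact.out : p.Prime).two_le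
      have h4 : n * ((j - i) + 1) ≤ n * p ^ (j - i) := Nat.mul_le_mul_left n h3
      have h5 : (j - i) ≤ n * (j - i) := Nat.le_mul_of_pos_left _ hn
      have h6 : n * ((j - i) + 1) = n * (j - i) + n := by ring
      have h7 : i + (j - i) = j := by omega
      linarith
    refine dvd_trans (pow_dvd_pow _ h2) ⟨d ^ p ^ (j - i), ?_⟩
    rw [hd]; ring

lemma hp0 : (p : ℤ_[p]) ≠ 0 := Nat.cast_ne_zero.mpr (Fact.out : p.Prime).ne_zero

/-- Any Witt vector with the prescribed ghost components has all coefficients divisible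
by `p ^ n`, and satisfies the recursive coefficient identity. -/
lemma coeff_dvd (hn : 1 ≤ n) (a : WittVector p ℤ_[p])
    (h : ∀ j, ghostComponent j a = (p : ℤ_[p]) ^ (p ^ (j + 1) * n - 1)) :
    ∀ j, (p : ℤ_[p]) ^ n ∣ a.coeff j := by
  intro j
  induction j using Nat.strong_induction_on with
  | _ j ih =>
    have hg := h j
    rw [ghost_eq, Finset.sum_range_succ] at hg
    simp only [Nat.sub_self, pow_zero, pow_one] at hg
    have heq : (p : ℤ_[p]) ^ j * a.coeff j
        = (p : ℤ_[p]) ^ (p ^ (j + 1) * n - 1)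
          - ∑ i ∈ range j, (p : ℤ_[p]) ^ i * a.coeff i ^ p ^ (j - i) := by
      linear_combination hg
    have hd := step p n hn a.coeff j (fun i hi => ih i hi)
    rw [← heq, pow_add] at hd
    rcases hd with ⟨d, hd⟩
    refine ⟨d, mul_left_cancel₀ (pow_ne_zero j (hp0 p)) ?_⟩
    rw [hd]; ring

open scoped Classical in
/-- One step of the recursive construction of the Witt coordinates. -/
noncomputable def nextc (j : ℕ) (f : ℕ → ℤ_[p]) : ℤ_[p] :=
  if h : (p : ℤ_[p]) ^ j ∣ ((p : ℤ_[p]) ^ (p ^ (j + 1) * n - 1)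
      - ∑ i ∈ range j, (p : ℤ_[p]) ^ i * f i ^ p ^ (j - i)) then h.choose else 0

/-- Finite stages of the recursion. -/
noncomputable def cf : ℕ → ℕ → ℤ_[p]
  | 0 => fun _ => 0
  | (j + 1) => fun i => if i = j then nextc p n j (cf j) else cf j i

/-- The Witt coordinates of the desired element. -/
noncomputable def c (i : ℕ) : ℤ_[p] := nextc p n i (cf p n i)

lemma cf_stable : ∀ m i, i < m → cf p n m i = c p n i := by
  intro m
  induction m with
  | zero => omega
  | succ j ih =>
    intro i hi
    by_cases h : i = j
    · subst h
      simp [cf, c]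
    · have hij : i < j := by omega
      simp only [cf, if_neg h]
      exact ih i hij

lemma nextc_congr (j : ℕ) (f g : ℕ → ℤ_[p]) (h : ∀ i, i < j → f i = g i) :
    nextc p n j f = nextc p n j g := by
  unfold nextc
  have hs : ∑ i ∈ range j, (p : ℤ_[p]) ^ i * f i ^ p ^ (j - i)
      = ∑ i ∈ range j, (p : ℤ_[p]) ^ i * g i ^ p ^ (j - i) :=
    Finset.sum_congr rfl fun i hi => by rw [h i (mem_range.mp hi)]
  rw [hs]

lemma c_eq (j : ℕ) : c p n j = nextc p n j (c p n) :=
  nextc_congr p n j _ _ (fun i hi => cf_stable p n j i hi)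

lemma c_spec (hn : 1 ≤ n) : ∀ j, (p : ℤ_[p]) ^ n ∣ c p n j ∧
    (p : ℤ_[p]) ^ j * c p n j = (p : ℤ_[p]) ^ (p ^ (j + 1) * n - 1)
      - ∑ i ∈ range j, (p : ℤ_[p]) ^ i * c p n i ^ p ^ (j - i) := by
  intro j
  induction j using Nat.strong_induction_on with
  | _ j ih =>
    have hd := step p n hn (c p n) j (fun i hi => (ih i hi).1)
    have hdj : (p : ℤ_[p]) ^ j ∣ ((p : ℤ_[p]) ^ (p ^ (j + 1) * n - 1)
        - ∑ i ∈ range j, (p : ℤ_[p]) ^ i * c p n i ^ p ^ (j - i)) :=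
      dvd_trans (pow_dvd_pow _ (by omega : j ≤ n + j)) hd
    have hcj : c p n j = hdj.choose := by
      rw [c_eq, nextc, dif_pos hdj]
    have hspec := hdj.choose_spec
    refine ⟨?_, by rw [hcj]; exact hspec.symm⟩
    rw [hcj]
    rcases hd with ⟨d, hdd⟩
    refine ⟨d, mul_left_cancel₀ (pow_ne_zero j (hp0 p)) ?_⟩
    rw [← hspec, hdd, pow_add]
    ring

end Stmt5Helper

/-- Let `p` be a prime and `n ≥ 1`. There exists `a ∈ W(ℤ_p)` whose ghost components are
`w_j(a) = p^(p^(j+1)·n − 1)` for all `j ≥ 0`, and any `a ∈ W(ℤ_p)` with these ghost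
components is sent to `0` by the map `W(ℤ_p) → W(ℤ/p^n)` induced by the projection
`ℤ_p → ℤ/p^n`. -/
theorem stmt5 (p : ℕ) [Fact p.Prime] (n : ℕ) (hn : 1 ≤ n) :
    (∃ a : WittVector p ℤ_[p],
      ∀ j : ℕ, ghostComponent j a = (p : ℤ_[p]) ^ (p ^ (j + 1) * n - 1)) ∧
    (∀ a : WittVector p ℤ_[p],
      (∀ j : ℕ, ghostComponent j a = (p : ℤ_[p]) ^ (p ^ (j + 1) * n - 1)) →
      WittVector.map (PadicInt.toZModPow n) a = 0) := by
  constructor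
  · refine ⟨WittVector.mk p (Stmt5Helper.c p n), fun j => ?_⟩
    rw [Stmt5Helper.ghost_eq, Finset.sum_range_succ]
    simp only [WittVector.coeff_mk, Nat.sub_self, pow_zero, pow_one]
    linear_combination (Stmt5Helper.c_spec p n hn j).2
  · intro a h
    apply WittVector.ext
    intro j
    rw [WittVector.map_coeff, WittVector.zero_coeff]
    obtain ⟨d, hd⟩ := Stmt5Helper.coeff_dvd p n hn a h j
    rw [hd, map_mul, map_pow]
    have h1 : (PadicInt.toZModPow n) ((p : ℤ_[p])) = (p : ZMod (p ^ n)) := by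
      simp [map_natCast]
    have h2 : ((p : ZMod (p ^ n))) ^ n = 0 := by
      rw [← Nat.cast_pow, ZMod.natCast_self]
    rw [h1, h2, zero_mul]
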